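/- Let q+1 parameters a₁,…,a_{q+1} and q parameters b₁,…,b_q be positive reals with γ := ∑ b_j − ∑ a_j < 0. Then lim_{z→1⁻} (1-z)^{-γ} · ₍q+1₎F_q(a₁,…,a_{q+1}; b₁,…,b_q; z) = Γ(-γ) ∏ Γ(b_j) / ∏ Γ(a_j). -/

import Mathlib

open Filter

/-- The generalized hypergeometric function `_{q+1}F_q` as a power series. -/
noncomputable def genHyp (q : ℕ) (a : Fin (q+1) → ℝ) (b : Fin q → ℝ) (z : ℝ) : ℝ :=
  ∑' k : ℕ,
    (∏ i, (ascPochhammer ℝ k).eval (a i)) /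
      ((∏ j, (ascPochhammer ℝ k).eval (b j)) * (k.factorial : ℝ)) * z ^ k

set_option maxHeartbeats 1000000

namespace GenHypAux

open Real Finset


/-- `(x)_k` positivity -/
lemma poch_pos {x : ℝ} (hx : 0 < x) (k : ℕ) : 0 < (ascPochhammer ℝ k).eval x := by
  induction k with
  | zero => simp [ascPochhammer_zero]
  | succ n ih =>
    rw [ascPochhammer_succ_eval]
    positivity

/-- the coefficients of the binomial series -/
noncomputable def dd (s : ℝ) (k : ℕ) : ℝ := (ascPochhammer ℝ k).eval s / k.factorial

lemma dd_pos {s : ℝ} (hs : 0 < s) (k : ℕ) : 0 < dd s k :=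
  div_pos (poch_pos hs k) (by positivity)

lemma dd_zero (s : ℝ) : dd s 0 = 1 := by simp [dd, ascPochhammer_zero]

lemma dd_succ (s : ℝ) (k : ℕ) :
    dd s (k+1) * (k+1) = dd s k * (s + k) := by
  have hk : (k.factorial : ℝ) ≠ 0 := by positivity
  rw [dd, dd, ascPochhammer_succ_eval, Nat.factorial_succ]
  push_cast
  field_simp

lemma dd_le {s : ℝ} (hs : 0 < s) (k : ℕ) : dd s k ≤ ((k : ℝ) + 1) ^ (⌈s⌉₊) := by
  set m := ⌈s⌉₊ with hm
  have hsm : s ≤ m := Nat.le_ceil s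
  induction k with
  | zero => simpa [dd_zero] using one_le_pow₀ (by norm_num : (1:ℝ) ≤ 0 + 1)
  | succ k ih =>
    have hk1 : (0:ℝ) < (k:ℝ) + 1 := by positivity
    have key : ((k:ℝ) + 1) ^ m * (s + k) ≤ ((k:ℝ) + 2) ^ m * ((k:ℝ)+1) := by
      have hb : (1:ℝ) + m * (1 / ((k:ℝ)+1)) ≤ (1 + 1/((k:ℝ)+1)) ^ m :=
        one_add_mul_le_pow (by have : (0:ℝ) ≤ 1/((k:ℝ)+1) := by positivity
                               linarith) m
      have h2 : ((k:ℝ)+2)^m = (1 + 1/((k:ℝ)+1))^m * ((k:ℝ)+1)^m := by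
        rw [← mul_pow]; congr 1; field_simp; ring
      rw [h2]
      have h3 : s + k ≤ ((1:ℝ) + m * (1/((k:ℝ)+1))) * ((k:ℝ)+1) := by
        field_simp
        nlinarith
      calc ((k:ℝ)+1)^m * (s+k) ≤ ((k:ℝ)+1)^m * (((1:ℝ) + m * (1/((k:ℝ)+1))) * ((k:ℝ)+1)) := by
            apply mul_le_mul_of_nonneg_left h3 (by positivity)
        _ ≤ ((k:ℝ)+1)^m * ((1 + 1/((k:ℝ)+1))^m * ((k:ℝ)+1)) := by
            apply mul_le_mul_of_nonneg_left (mul_le_mul_of_nonneg_right hb hk1.le) (by positivity)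
        _ = (1 + 1/((k:ℝ)+1))^m * ((k:ℝ)+1)^m * ((k:ℝ)+1) := by ring
    have hstep : dd s (k+1) = dd s k * (s + k) / ((k:ℝ)+1) := by
      rw [← dd_succ s k]; field_simp
    rw [hstep]
    rw [div_le_iff₀ hk1]
    have : dd s k * (s + k) ≤ ((k:ℝ)+1)^m * (s+k) := by
      apply mul_le_mul_of_nonneg_right ih (by positivity)
    calc dd s k * (s+k) ≤ ((k:ℝ)+1)^m * (s+k) := this
      _ ≤ ((k:ℝ)+2)^m * ((k:ℝ)+1) := key
      _ = ((((k:ℕ):ℝ)+1)+1)^m * ((k:ℝ)+1) := by push_cast; ring_nf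
      _ = ((((k+1:ℕ):ℝ))+1)^m * ((k:ℝ)+1) := by push_cast; ring_nf





lemma summable_aux (m : ℕ) {r : ℝ} (h0 : 0 < r) (h1 : r < 1) :
    Summable (fun k : ℕ => ((k:ℝ)+1)^m * r^k) := by
  have h : Summable (fun n : ℕ => (n:ℝ)^m * r^n) :=
    summable_pow_mul_geometric_of_norm_lt_one m (by rwa [Real.norm_eq_abs, abs_of_pos h0])
  have h2 := (summable_nat_add_iff 1).2 h
  have h3 := h2.mul_left r⁻¹
  apply h3.congr
  intro n
  have : r ≠ 0 := h0.ne'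
  push_cast
  field_simp
  ring

lemma summable_dd {s : ℝ} (hs : 0 < s) {z : ℝ} (hz : |z| < 1) :
    Summable (fun k : ℕ => dd s k * z^k) := by
  set r : ℝ := (1 + |z|)/2 with hr
  have h0 : 0 < r := by positivity
  have h1 : r < 1 := by rw [hr]; linarith
  have hzr : |z| ≤ r := by rw [hr]; linarith
  apply Summable.of_norm_bounded (summable_aux ⌈s⌉₊ h0 h1)
  intro k
  rw [norm_mul, Real.norm_eq_abs, Real.norm_eq_abs, abs_of_pos (dd_pos hs k), abs_pow]
  apply mul_le_mul (dd_le hs k) (pow_le_pow_left₀ (abs_nonneg z) hzr k) (by positivity) (by positivity)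

lemma summable_dd_deriv {s : ℝ} (hs : 0 < s) {r : ℝ} (h0 : 0 < r) (h1 : r < 1) {z : ℝ}
    (hz : |z| ≤ r) :
    Summable (fun k : ℕ => dd s k * (k * z^(k-1))) := by
  apply Summable.of_norm_bounded ((summable_aux (⌈s⌉₊+1) h0 h1).div_const r)
  intro k
  match k with
  | 0 => simp; positivity
  | (n+1) =>
    have hd := dd_pos hs (n+1)
    rw [norm_mul, norm_mul, Real.norm_eq_abs, Real.norm_eq_abs, Real.norm_eq_abs,
      abs_of_pos hd, abs_pow]
    simp only [Nat.add_sub_cancel]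
    have e1 : dd s (n+1) ≤ ((n:ℝ)+2)^(⌈s⌉₊) := by
      have h := dd_le hs (n+1); push_cast at h
      have e0 : ((n:ℝ)+1+1) = (n:ℝ)+2 := by ring
      rw [e0] at h; exact h
    have e2 : |((n+1 : ℕ) : ℝ)| = (n:ℝ)+1 := by push_cast; rw [abs_of_pos]; positivity
    have e3 : |z|^n ≤ r^n := pow_le_pow_left₀ (abs_nonneg z) hz n
    have : dd s (n+1) * (|((n+1 : ℕ) : ℝ)| * |z|^n) ≤ ((n:ℝ)+2)^(⌈s⌉₊) * (((n:ℝ)+1) * r^n) := by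
      rw [e2]
      apply mul_le_mul e1 (mul_le_mul_of_nonneg_left e3 (by positivity)) (by positivity) (by positivity)
    refine this.trans ?_
    have : ((n:ℝ)+1) ≤ ((n:ℝ)+2) := by linarith
    have hrne : r ≠ 0 := h0.ne'
    calc ((n:ℝ)+2)^(⌈s⌉₊) * (((n:ℝ)+1) * r^n)
        ≤ ((n:ℝ)+2)^(⌈s⌉₊) * (((n:ℝ)+2) * r^n) := by
          apply mul_le_mul_of_nonneg_left (mul_le_mul_of_nonneg_right this (by positivity)) (by positivity)
      _ = ((n:ℝ)+2)^(⌈s⌉₊+1) * r^n := by ring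
      _ = (((n+1:ℕ):ℝ)+1)^(⌈s⌉₊+1) * r^(n+1) / r := by push_cast; field_simp; ring

lemma hasDerivAt_D {s : ℝ} (hs : 0 < s) {z : ℝ} (hz : |z| < 1) :
    HasDerivAt (fun y => ∑' k : ℕ, dd s k * y^k)
      (∑' k : ℕ, dd s k * (k * z^(k-1))) z := by
  set r : ℝ := (1 + |z|)/2 with hr
  have h0 : 0 < r := by positivity
  have h1 : r < 1 := by rw [hr]; linarith
  have hzr : |z| < r := by rw [hr]; linarith
  apply hasDerivAt_tsum_of_isPreconnected
    (u := fun k : ℕ => ((k:ℝ)+1)^(⌈s⌉₊+1) * r^k / r)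
    ((summable_aux (⌈s⌉₊+1) h0 h1).div_const r) isOpen_Ioo
    (convex_Ioo (-r) r).isPreconnected
    (g := fun k y => dd s k * y^k) (g' := fun k y => dd s k * (k * y^(k-1)))
    (fun n y _ => (hasDerivAt_pow n y).const_mul _)
    ?_ (y₀ := 0) (by constructor <;> simp [h0] <;> linarith)
    (summable_dd hs (by simp))
    (abs_lt.mp hzr)
  · intro n y hy
    have hyr : |y| ≤ r := le_of_lt (abs_lt.mpr ⟨hy.1, hy.2⟩)
    match n with
    | 0 => simp; positivity
    | (n+1) =>
      have hd := dd_pos hs (n+1)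
      rw [norm_mul, norm_mul, Real.norm_eq_abs, Real.norm_eq_abs, Real.norm_eq_abs,
        abs_of_pos hd, abs_pow]
      simp only [Nat.add_sub_cancel]
      have e1 : dd s (n+1) ≤ ((n:ℝ)+2)^(⌈s⌉₊) := by
        have h := dd_le hs (n+1); push_cast at h
        have e0 : ((n:ℝ)+1+1) = (n:ℝ)+2 := by ring
        rw [e0] at h; exact h
      have e2 : |((n+1 : ℕ) : ℝ)| = (n:ℝ)+1 := by push_cast; rw [abs_of_pos]; positivity
      have e3 : |y|^n ≤ r^n := pow_le_pow_left₀ (abs_nonneg y) hyr n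
      have h4 : dd s (n+1) * (|((n+1 : ℕ) : ℝ)| * |y|^n) ≤ ((n:ℝ)+2)^(⌈s⌉₊) * (((n:ℝ)+1) * r^n) := by
        rw [e2]
        apply mul_le_mul e1 (mul_le_mul_of_nonneg_left e3 (by positivity)) (by positivity) (by positivity)
      refine h4.trans ?_
      have h5 : ((n:ℝ)+1) ≤ ((n:ℝ)+2) := by linarith
      have hrne : r ≠ 0 := h0.ne'
      calc ((n:ℝ)+2)^(⌈s⌉₊) * (((n:ℝ)+1) * r^n)
          ≤ ((n:ℝ)+2)^(⌈s⌉₊) * (((n:ℝ)+2) * r^n) := by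
            apply mul_le_mul_of_nonneg_left (mul_le_mul_of_nonneg_right h5 (by positivity)) (by positivity)
        _ = ((n:ℝ)+2)^(⌈s⌉₊+1) * r^n := by ring
        _ = (((n+1:ℕ):ℝ)+1)^(⌈s⌉₊+1) * r^(n+1) / r := by push_cast; field_simp; ring






lemma deriv_identity {s : ℝ} (hs : 0 < s) {z : ℝ} (hz : |z| < 1) :
    (1 - z) * (∑' k : ℕ, dd s k * (k * z^(k-1))) = s * ∑' k : ℕ, dd s k * z^k := by
  set r : ℝ := (1 + |z|)/2 with hr
  have h0 : 0 < r := by positivity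
  have h1 : r < 1 := by rw [hr]; linarith
  have hzr : |z| ≤ r := by rw [hr]; linarith
  have hS : Summable (fun k : ℕ => dd s k * z^k) := summable_dd hs hz
  have hF' : Summable (fun k : ℕ => dd s k * ((k:ℝ) * z^(k-1))) :=
    summable_dd_deriv hs h0 h1 hzr
  have shift : (∑' k : ℕ, dd s k * ((k:ℝ) * z^(k-1)))
      = ∑' k : ℕ, dd s (k+1) * (((k:ℝ)+1) * z^k) := by
    rw [hF'.tsum_eq_zero_add]
    push_cast
    simp
  have hterm : ∀ k : ℕ, dd s (k+1) * (((k:ℝ)+1) * z^k)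
      = s * (dd s k * z^k) + z * (dd s k * ((k:ℝ) * z^(k-1))) := by
    intro k
    have h2 : dd s (k+1) * (((k:ℝ)+1) * z^k) = (dd s k * (s+(k:ℝ))) * z^k := by
      rw [← dd_succ s k]; push_cast; ring
    rw [h2]
    match k with
    | 0 => norm_num; ring
    | n+1 =>
      push_cast
      ring
  have key : (∑' k : ℕ, dd s k * ((k:ℝ) * z^(k-1)))
      = s * (∑' k : ℕ, dd s k * z^k) + z * (∑' k : ℕ, dd s k * ((k:ℝ) * z^(k-1))) := by
    calc (∑' k : ℕ, dd s k * ((k:ℝ) * z^(k-1)))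
        = (∑' k : ℕ, dd s (k+1) * (((k:ℝ)+1) * z^k)) := shift
      _ = ∑' k : ℕ, (s * (dd s k * z^k) + z * (dd s k * ((k:ℝ) * z^(k-1)))) := by
          exact tsum_congr hterm
      _ = (∑' k : ℕ, s * (dd s k * z^k)) + ∑' k : ℕ, z * (dd s k * ((k:ℝ) * z^(k-1))) :=
          Summable.tsum_add (hS.mul_left s) (hF'.mul_left z)
      _ = s * (∑' k : ℕ, dd s k * z^k) + z * (∑' k : ℕ, dd s k * ((k:ℝ) * z^(k-1))) := by
          rw [tsum_mul_left, tsum_mul_left]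
  linarith [key]

lemma binom_eq {s : ℝ} (hs : 0 < s) {z : ℝ} (hz0 : 0 ≤ z) (hz1 : z < 1) :
    (1 - z)^s * ∑' k : ℕ, dd s k * z^k = 1 := by
  set g : ℝ → ℝ := fun y => (1 - y)^s * ∑' k : ℕ, dd s k * y^k with hg
  have habs : ∀ y ∈ Set.Icc (0:ℝ) z, |y| < 1 := by
    intro y hy
    rw [abs_lt]
    constructor <;> [linarith [hy.1]; linarith [hy.2]]
  have hderiv : ∀ y ∈ Set.Icc (0:ℝ) z, HasDerivAt g 0 y := by
    intro y hy
    have hy1 : |y| < 1 := habs y hy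
    have h1y : (0:ℝ) < 1 - y := by cases abs_lt.mp hy1; linarith
    have hF := hasDerivAt_D hs hy1
    have hin : HasDerivAt (fun y : ℝ => 1 - y) (-1) y := by
      simpa using (hasDerivAt_id y).const_sub 1
    have hrp : HasDerivAt (fun w : ℝ => (1 - w)^s) (s * (1-y)^(s-1) * (-1)) y := by
      exact (Real.hasDerivAt_rpow_const (Or.inl h1y.ne')).comp y hin
    have := hrp.mul hF
    refine this.congr_deriv ?_
    have hss : (1-y)^s = (1-y)^(s-1) * (1-y) := by
      rw [← Real.rpow_add_one h1y.ne' (s-1)]; ring_nf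
    have hdi := deriv_identity hs hy1
    rw [hss]
    linear_combination ((1-y)^(s-1)) * hdi
  have hcont : ContinuousOn g (Set.Icc 0 z) := fun y hy =>
    ((hderiv y hy).continuousAt).continuousWithinAt
  have := constant_of_has_deriv_right_zero hcont
    (fun y hy => ((hderiv y (Set.mem_Icc_of_Ico hy)).hasDerivWithinAt)) z
    (Set.right_mem_Icc.mpr hz0)
  rw [hg] at this
  simp only at this
  rw [this]
  have hF0 : ∑' k : ℕ, dd s k * (0:ℝ)^k = 1 := by
    rw [tsum_eq_single 0 (fun b hb => by simp [zero_pow hb])]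
    simp [dd_zero]
  rw [hF0]
  simp



lemma abelian {c d : ℕ → ℝ} {A : ℝ} (hd : ∀ k, 0 < d k)
    (hratio : Tendsto (fun k => c k / d k) atTop (nhds A))
    (hSd : ∀ z : ℝ, 0 < z → z < 1 → Summable (fun k => d k * z^k))
    (hDtop : Tendsto (fun z => ∑' k : ℕ, d k * z^k) (nhdsWithin 1 (Set.Iio 1)) atTop) :
    Tendsto (fun z : ℝ => (∑' k : ℕ, c k * z^k) / (∑' k : ℕ, d k * z^k))
      (nhdsWithin 1 (Set.Iio 1)) (nhds A) := by
  -- uniform bound |c k| ≤ K * d k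
  obtain ⟨K, hK⟩ : ∃ K : ℝ, ∀ k, |c k| / d k ≤ K := by
    have habs : Tendsto (fun k => |c k / d k|) atTop (nhds |A|) := hratio.abs
    obtain ⟨K, hK⟩ := habs.bddAbove_range
    refine ⟨K, fun k => ?_⟩
    have := hK (Set.mem_range_self k)
    rwa [abs_div, abs_of_pos (hd k)] at this
  have hcK : ∀ k, |c k| ≤ K * d k := fun k => by
    have := hK k
    rw [div_le_iff₀ (hd k)] at this
    linarith [this]
  have hSc : ∀ z : ℝ, 0 < z → z < 1 → Summable (fun k => c k * z^k) := by
    intro z hz0 hz1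
    apply Summable.of_norm_bounded ((hSd z hz0 hz1).mul_left K)
    intro k
    rw [norm_mul, Real.norm_eq_abs, Real.norm_eq_abs, abs_pow, abs_of_pos hz0]
    calc |c k| * z^k ≤ (K * d k) * z^k :=
          mul_le_mul_of_nonneg_right (hcK k) (by positivity)
      _ = K * (d k * z^k) := by ring
  have hSe : ∀ z : ℝ, 0 < z → z < 1 →
      Summable (fun k => |c k - A * d k| * z^k) := by
    intro z hz0 hz1
    apply Summable.of_norm_bounded (((hSd z hz0 hz1).mul_left (K + |A|)))
    intro k
    rw [Real.norm_eq_abs, abs_mul, abs_abs, abs_pow, abs_of_pos hz0]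
    have h1 : |c k - A * d k| ≤ K * d k + |A| * d k := by
      calc |c k - A * d k| ≤ |c k| + |A * d k| := abs_sub _ _
        _ ≤ K * d k + |A| * d k := by
            rw [abs_mul, abs_of_pos (hd k)]
            exact add_le_add (hcK k) le_rfl
    calc |c k - A * d k| * z^k ≤ (K * d k + |A| * d k) * z^k :=
          mul_le_mul_of_nonneg_right h1 (by positivity)
      _ = (K + |A|) * (d k * z^k) := by ring
  rw [Metric.tendsto_nhds]
  intro ε hε
  obtain ⟨N, hN⟩ := Metric.tendsto_atTop.mp hratio (ε/2) (half_pos hε)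
  set B : ℝ := ∑ k ∈ Finset.range N, |c k - A * d k| with hB
  have hB0 : 0 ≤ B := Finset.sum_nonneg fun k _ => abs_nonneg _
  set M : ℝ := (B + 1) * 2 / ε with hM
  have hM0 : 0 < M := by positivity
  have h1 : ∀ᶠ z : ℝ in nhdsWithin 1 (Set.Iio 1), z ∈ Set.Ioo (0:ℝ) 1 :=
    Ioo_mem_nhdsLT (by norm_num)
  have h2 : ∀ᶠ z : ℝ in nhdsWithin 1 (Set.Iio 1),
      M < ∑' k : ℕ, d k * z^k := hDtop.eventually (eventually_gt_atTop M)
  filter_upwards [h1, h2] with z hz hMz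
  obtain ⟨hz0, hz1⟩ := hz
  set D : ℝ := ∑' k : ℕ, d k * z^k with hD
  set S : ℝ := ∑' k : ℕ, c k * z^k with hS
  have hDpos : 0 < D := lt_trans hM0 hMz
  have hsd := hSd z hz0 hz1
  have hsc := hSc z hz0 hz1
  have hse := hSe z hz0 hz1
  -- key estimate
  have hsub : S - A * D = ∑' k : ℕ, (c k - A * d k) * z^k := by
    rw [hS, hD, ← tsum_mul_left (a := A)]
    rw [← Summable.tsum_sub hsc (hsd.mul_left A)]
    congr 1; funext k; ring
  have hnorm : |S - A * D| ≤ ∑' k : ℕ, |c k - A * d k| * z^k := by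
    rw [hsub]
    have := norm_tsum_le_tsum_norm (f := fun k : ℕ => (c k - A * d k) * z^k) ?_
    · rw [Real.norm_eq_abs] at this
      refine this.trans (le_of_eq (tsum_congr fun k => ?_))
      rw [Real.norm_eq_abs, abs_mul, abs_pow, abs_of_pos hz0]
    · apply hse.congr
      intro k
      rw [Real.norm_eq_abs, abs_mul, abs_pow, abs_of_pos hz0]
  have hsplit : (∑' k : ℕ, |c k - A * d k| * z^k)
      = (∑ k ∈ Finset.range N, |c k - A * d k| * z^k)
        + ∑' k : ℕ, |c (k+N) - A * d (k+N)| * z^(k+N) := by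
    rw [← hse.sum_add_tsum_nat_add N]
  have hhead : (∑ k ∈ Finset.range N, |c k - A * d k| * z^k) ≤ B := by
    rw [hB]
    apply Finset.sum_le_sum
    intro k _
    calc |c k - A * d k| * z^k ≤ |c k - A * d k| * 1 := by
          apply mul_le_mul_of_nonneg_left _ (abs_nonneg _)
          exact pow_le_one₀ hz0.le hz1.le
      _ = |c k - A * d k| := mul_one _
  have htail : (∑' k : ℕ, |c (k+N) - A * d (k+N)| * z^(k+N))
      ≤ (ε/2) * D := by
    have hptw : ∀ k : ℕ, |c (k+N) - A * d (k+N)| * z^(k+N)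
        ≤ (ε/2) * (d (k+N) * z^(k+N)) := by
      intro k
      have hNk := hN (k+N) (Nat.le_add_left N k)
      rw [Real.dist_eq] at hNk
      have hd' := hd (k+N)
      have : |c (k+N) - A * d (k+N)| ≤ (ε/2) * d (k+N) := by
        have heq : c (k+N) - A * d (k+N) = (c (k+N) / d (k+N) - A) * d (k+N) := by
          field_simp
        rw [heq, abs_mul, abs_of_pos hd']
        exact mul_le_mul_of_nonneg_right hNk.le hd'.le
      calc |c (k+N) - A * d (k+N)| * z^(k+N) ≤ ((ε/2) * d (k+N)) * z^(k+N) :=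
            mul_le_mul_of_nonneg_right this (by positivity)
        _ = (ε/2) * (d (k+N) * z^(k+N)) := by ring
    have hsum1 : Summable (fun k : ℕ => |c (k+N) - A * d (k+N)| * z^(k+N)) :=
      (summable_nat_add_iff N).mpr hse
    have hsum2 : Summable (fun k : ℕ => (ε/2) * (d (k+N) * z^(k+N))) :=
      (((summable_nat_add_iff N).mpr hsd).mul_left (ε/2))
    calc (∑' k : ℕ, |c (k+N) - A * d (k+N)| * z^(k+N))
        ≤ ∑' k : ℕ, (ε/2) * (d (k+N) * z^(k+N)) := Summable.tsum_le_tsum hptw hsum1 hsum2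
      _ = (ε/2) * ∑' k : ℕ, d (k+N) * z^(k+N) := tsum_mul_left
      _ ≤ (ε/2) * D := by
          apply mul_le_mul_of_nonneg_left _ (half_pos hε).le
          have := hsd.sum_add_tsum_nat_add N
          have hhead0 : 0 ≤ ∑ k ∈ Finset.range N, d k * z^k :=
            Finset.sum_nonneg fun k _ => mul_nonneg (hd k).le (pow_nonneg hz0.le k)
          rw [hD]
          linarith [this]
  have key : |S - A * D| ≤ B + (ε/2) * D := by
    calc |S - A * D| ≤ ∑' k : ℕ, |c k - A * d k| * z^k := hnorm
      _ = _ := hsplit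
      _ ≤ B + (ε/2) * D := add_le_add hhead htail
  rw [Real.dist_eq]
  have heq2 : S / D - A = (S - A * D) / D := by field_simp
  rw [heq2, abs_div, abs_of_pos hDpos]
  rw [div_lt_iff₀ hDpos]
  have hBM : B + 1 < (ε/2) * D := by
    have : (ε/2) * M = B + 1 := by rw [hM]; field_simp
    calc B + 1 = (ε/2) * M := this.symm
      _ < (ε/2) * D := by
          apply mul_lt_mul_of_pos_left hMz (half_pos hε)
  calc |S - A * D| ≤ B + (ε/2) * D := key
    _ < (ε/2) * D + (ε/2) * D := by linarith
    _ = ε * D := by ring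




lemma poch_eval_prod (x : ℝ) (k : ℕ) :
    (ascPochhammer ℝ k).eval x = ∏ i ∈ Finset.range k, (x + i) := by
  induction k with
  | zero => simp [ascPochhammer_zero]
  | succ n ih => rw [ascPochhammer_succ_eval, ih, Finset.prod_range_succ]

lemma inv_gammaSeq_tendsto {x : ℝ} (hx : 0 < x) :
    Tendsto (fun k : ℕ => (ascPochhammer ℝ k).eval x * (x + k) / ((k:ℝ)^x * k.factorial))
      atTop (nhds (Real.Gamma x)⁻¹) := by
  have h := (Real.GammaSeq_tendsto_Gamma x).inv₀ (Real.Gamma_pos_of_pos hx).ne'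
  apply h.congr
  intro k
  rw [Real.GammaSeq]
  rw [Finset.prod_range_succ, ← poch_eval_prod]
  rw [inv_div]

lemma nat_shift_ratio_tendsto (x y : ℝ) :
    Tendsto (fun k : ℕ => (y + k) / (x + k)) atTop (nhds 1) := by
  have hx : Tendsto (fun k : ℕ => x / (k:ℝ)) atTop (nhds 0) :=
    tendsto_const_div_atTop_nhds_zero_nat x
  have hy : Tendsto (fun k : ℕ => y / (k:ℝ)) atTop (nhds 0) :=
    tendsto_const_div_atTop_nhds_zero_nat y
  have h := (hy.add_const 1).div (hx.add_const 1) (by norm_num)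
  have : (0:ℝ) + 1 = 1 := by norm_num
  rw [this, div_one] at h
  apply h.congr'
  filter_upwards [eventually_ge_atTop 1] with k hk
  have hk0 : (0:ℝ) < (k:ℝ) := by exact_mod_cast hk
  simp only [Pi.div_apply]
  field_simp

lemma poch_ratio_tendsto {x y : ℝ} (hx : 0 < x) (hy : 0 < y) :
    Tendsto (fun k : ℕ => (ascPochhammer ℝ k).eval x /
      ((ascPochhammer ℝ k).eval y * (k:ℝ)^(x - y))) atTop
      (nhds (Real.Gamma y / Real.Gamma x)) := by
  have h := ((inv_gammaSeq_tendsto hx).div (inv_gammaSeq_tendsto hy)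
      (by positivity)).mul (nat_shift_ratio_tendsto x y)
  have heq : (Real.Gamma x)⁻¹ / (Real.Gamma y)⁻¹ * 1 = Real.Gamma y / Real.Gamma x := by
    field_simp
  rw [heq] at h
  apply h.congr'
  filter_upwards [eventually_ge_atTop 1] with k hk
  have hk0 : (0:ℝ) < (k:ℝ) := by exact_mod_cast hk
  have hpx := poch_pos hx k
  have hpy := poch_pos hy k
  have hxk : (0:ℝ) < x + k := by linarith
  have hyk : (0:ℝ) < y + k := by linarith
  have hkx : (0:ℝ) < (k:ℝ)^x := Real.rpow_pos_of_pos hk0 x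
  have hky : (0:ℝ) < (k:ℝ)^y := Real.rpow_pos_of_pos hk0 y
  have hfac : (0:ℝ) < (k.factorial : ℝ) := by positivity
  have hsub : (k:ℝ)^(x-y) = (k:ℝ)^x / (k:ℝ)^y := Real.rpow_sub hk0 x y
  simp only [Pi.div_apply]
  rw [hsub]
  field_simp

lemma rpow_prod {x : ℝ} (hx : 0 < x) {n : ℕ} (f : Fin n → ℝ) :
    ∏ i, x ^ (f i) = x ^ (∑ i, f i) := by
  rw [Real.rpow_def_of_pos hx (∑ i, f i), Finset.mul_sum, Real.exp_sum]
  exact Finset.prod_congr rfl fun i _ => Real.rpow_def_of_pos hx (f i)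

lemma coeff_ratio (q : ℕ) (a : Fin (q+1) → ℝ) (b : Fin q → ℝ)
    (ha : ∀ i, 0 < a i) (hb : ∀ j, 0 < b j) {s : ℝ} (hs : 0 < s)
    (hsum : ∑ i, a i = (∑ j, b j) + s) :
    Tendsto (fun k : ℕ =>
      ((∏ i, (ascPochhammer ℝ k).eval (a i)) /
        ((∏ j, (ascPochhammer ℝ k).eval (b j)) * (k.factorial:ℝ))) / dd s k)
      atTop (nhds (Real.Gamma s * (∏ j, Real.Gamma (b j)) / ∏ i, Real.Gamma (a i))) := by
  set b' : Fin (q+1) → ℝ := Fin.snoc b s with hb'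
  have hb'pos : ∀ i, 0 < b' i := by
    intro i
    refine Fin.lastCases ?_ ?_ i
    · simp [hb', Fin.snoc_last]; exact hs
    · intro j; simp [hb', Fin.snoc_castSucc]; exact hb j
  have hb'prod : ∀ (g : ℝ → ℝ), (∏ i, g (b' i)) = (∏ j, g (b j)) * g s := by
    intro g
    rw [Fin.prod_univ_castSucc]
    simp [hb', Fin.snoc_castSucc, Fin.snoc_last]
  have hb'sum : (∑ i, b' i) = (∑ j, b j) + s := by
    rw [Fin.sum_univ_castSucc]
    simp [hb', Fin.snoc_castSucc, Fin.snoc_last]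
  have hlim := tendsto_finset_prod (f := fun (i : Fin (q+1)) (k : ℕ) =>
      (ascPochhammer ℝ k).eval (a i) /
        ((ascPochhammer ℝ k).eval (b' i) * (k:ℝ)^(a i - b' i)))
    (x := atTop) (a := fun i => Real.Gamma (b' i) / Real.Gamma (a i)) Finset.univ
    (fun i _ => poch_ratio_tendsto (ha i) (hb'pos i))
  have hconst : (∏ i, Real.Gamma (b' i) / Real.Gamma (a i))
      = Real.Gamma s * (∏ j, Real.Gamma (b j)) / ∏ i, Real.Gamma (a i) := by
    rw [Finset.prod_div_distrib, hb'prod Real.Gamma]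
    ring
  rw [hconst] at hlim
  apply hlim.congr'
  filter_upwards [eventually_ge_atTop 1] with k hk
  have hk0 : (0:ℝ) < (k:ℝ) := by exact_mod_cast hk
  have hrp : (∏ i, (k:ℝ) ^ (a i - b' i)) = 1 := by
    rw [rpow_prod hk0, Finset.sum_sub_distrib, hb'sum, hsum, sub_self, Real.rpow_zero]
  have hpb' : (∏ i, (ascPochhammer ℝ k).eval (b' i))
      = (∏ j, (ascPochhammer ℝ k).eval (b j)) * (ascPochhammer ℝ k).eval s :=
    hb'prod (fun x => (ascPochhammer ℝ k).eval x)
  rw [Finset.prod_div_distrib, Finset.prod_mul_distrib, hrp, hpb']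
  have h1 : (0:ℝ) < ∏ j, (ascPochhammer ℝ k).eval (b j) :=
    Finset.prod_pos fun j _ => poch_pos (hb j) k
  have h2 : (0:ℝ) < (ascPochhammer ℝ k).eval s := poch_pos hs k
  have h3 : (0:ℝ) < (k.factorial : ℝ) := by positivity
  have h4 : dd s k = (ascPochhammer ℝ k).eval s / k.factorial := rfl
  rw [h4]
  field_simp


end GenHypAux

open GenHypAux Real Finset in
theorem genHyp_limit_at_one (q : ℕ) (a : Fin (q+1) → ℝ) (b : Fin q → ℝ)
    (ha : ∀ i, 0 < a i) (hb : ∀ j, 0 < b j)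
    (γ : ℝ) (hγdef : γ = (∑ j, b j) - (∑ i, a i)) (hγ : γ < 0) :
    Tendsto (fun z : ℝ => (1 - z) ^ (-γ) * genHyp q a b z)
      (nhdsWithin 1 (Set.Iio 1))
      (nhds (Real.Gamma (-γ) * (∏ j, Real.Gamma (b j)) / ∏ i, Real.Gamma (a i))) := by
  set s : ℝ := -γ with hsdef
  have hs : 0 < s := by rw [hsdef]; linarith
  have hsum : ∑ i, a i = (∑ j, b j) + s := by rw [hsdef, hγdef]; ring
  set c : ℕ → ℝ := fun k => (∏ i, (ascPochhammer ℝ k).eval (a i)) /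
      ((∏ j, (ascPochhammer ℝ k).eval (b j)) * (k.factorial : ℝ)) with hc
  have hd : ∀ k, 0 < dd s k := dd_pos hs
  have hratio := coeff_ratio q a b ha hb hs hsum
  have hSd : ∀ z : ℝ, 0 < z → z < 1 → Summable (fun k => dd s k * z^k) := by
    intro z hz0 hz1
    exact summable_dd hs (by rw [abs_of_pos hz0]; exact hz1)
  have hDtop : Tendsto (fun z : ℝ => ∑' k : ℕ, dd s k * z^k)
      (nhdsWithin 1 (Set.Iio 1)) atTop := by
    have hzto0 : Tendsto (fun z : ℝ => (1-z)^s) (nhdsWithin 1 (Set.Iio 1))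
        (nhdsWithin 0 (Set.Ioi 0)) := by
      rw [tendsto_nhdsWithin_iff]
      constructor
      · have hcont : ContinuousAt (fun t : ℝ => t ^ s) 0 :=
          Real.continuousAt_rpow_const 0 s (Or.inr hs.le)
        have hinner : Tendsto (fun z : ℝ => 1 - z) (nhdsWithin 1 (Set.Iio 1)) (nhds 0) := by
          have hcont2 : Continuous (fun z : ℝ => 1 - z) := continuous_const.sub continuous_id
          have := hcont2.tendsto (1:ℝ)
          simp only [sub_self] at this
          exact this.mono_left nhdsWithin_le_nhds
        have := hcont.tendsto.comp hinner
        simpa [Function.comp_def, Real.zero_rpow hs.ne'] using this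
      · filter_upwards [self_mem_nhdsWithin] with z hz
        exact Real.rpow_pos_of_pos (by simp at hz; linarith) s
    have hinv := tendsto_inv_nhdsGT_zero.comp hzto0
    apply hinv.congr'
    filter_upwards [Ioo_mem_nhdsLT (by norm_num :
      (0:ℝ) < 1)] with z hz
    have h1z : (0:ℝ) < 1 - z := by linarith [hz.2]
    have hbin := binom_eq hs hz.1.le hz.2
    have : (∑' k : ℕ, dd s k * z^k) = ((1-z)^s)⁻¹ :=
      eq_inv_of_mul_eq_one_left (by rw [mul_comm]; exact hbin)
    rw [Function.comp_apply, ← this]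
  have habel := abelian hd hratio hSd hDtop
  apply habel.congr'
  filter_upwards [Ioo_mem_nhdsLT (by norm_num :
    (0:ℝ) < 1)] with z hz
  have h1z : (0:ℝ) < 1 - z := by linarith [hz.2]
  have hbin := binom_eq hs hz.1.le hz.2
  have hgen : genHyp q a b z = ∑' k : ℕ, c k * z^k := rfl
  have hDpos : (0:ℝ) < ∑' k : ℕ, dd s k * z^k := by
    have h := hbin
    nlinarith [Real.rpow_pos_of_pos h1z s]
  have hDne : (∑' k : ℕ, dd s k * z^k) ≠ 0 := hDpos.ne'
  rw [hgen, div_eq_iff hDne]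
  linear_combination (-(∑' k : ℕ, c k * z^k)) * hbin
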